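/- Let γ > 1 and h ∈ L¹(Ω) with h > 0 a.e., where Ω has finite measure. Suppose (u_n) is a sequence of a.e. positive measurable functions on Ω with u_n → u a.e. and ∫_Ω h·u_n^(1-γ) ≤ K for all n and some constant K. Then u > 0 a.e. in Ω and ∫_Ω h·u^(1-γ) ≤ liminf ∫_Ω h·u_n^(1-γ) ≤ K. -/

import Mathlib

open MeasureTheory Filter

theorem stmt_15 {N : ℕ} (Ω : Set (EuclideanSpace ℝ (Fin N))) (hΩ : MeasurableSet Ω)
    (hΩfin : volume Ω < ⊤) (γ : ℝ) (hγ : 1 < γ)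
    (h : EuclideanSpace ℝ (Fin N) → ℝ) (hh : IntegrableOn h Ω)
    (hhpos : ∀ᵐ x ∂(volume.restrict Ω), 0 < h x)
    (un : ℕ → EuclideanSpace ℝ (Fin N) → ℝ) (u : EuclideanSpace ℝ (Fin N) → ℝ)
    (hmeas : ∀ n, Measurable (un n))
    (hpos : ∀ n, ∀ᵐ x ∂(volume.restrict Ω), 0 < un n x)
    (hae : ∀ᵐ x ∂(volume.restrict Ω), Tendsto (fun n => un n x) atTop (nhds (u x)))
    (K : ℝ)
    (hK : ∀ n, (∫⁻ x in Ω, ENNReal.ofReal (h x * un n x ^ (1 - γ))) ≤ ENNReal.ofReal K) :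
    (∀ᵐ x ∂(volume.restrict Ω), 0 < u x) ∧
    (∫⁻ x in Ω, ENNReal.ofReal (h x * u x ^ (1 - γ))) ≤
      atTop.liminf (fun n => ∫⁻ x in Ω, ENNReal.ofReal (h x * un n x ^ (1 - γ))) ∧
    atTop.liminf (fun n => ∫⁻ x in Ω, ENNReal.ofReal (h x * un n x ^ (1 - γ))) ≤
      ENNReal.ofReal K := by
  set μ := volume.restrict Ω with hμ
  set f : ℕ → EuclideanSpace ℝ (Fin N) → ENNReal :=
    fun n x => ENNReal.ofReal (h x * un n x ^ (1 - γ)) with hfdef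
  have hγ' : (0:ℝ) < γ - 1 := by linarith
  have hfmeas : ∀ n, AEMeasurable (f n) μ := fun n =>
    (hh.aemeasurable.mul ((hmeas n).pow_const (1-γ)).aemeasurable).ennreal_ofReal
  -- liminf of integrals ≤ K
  have hliminfK : atTop.liminf (fun n => ∫⁻ x in Ω, f n x) ≤ ENNReal.ofReal K := by
    refine le_trans (Filter.liminf_le_liminf (Eventually.of_forall hK)) ?_
    simp [Filter.liminf_const]
  -- Fatou
  have hFatou : (∫⁻ x, atTop.liminf (fun n => f n x) ∂μ) ≤
      atTop.liminf (fun n => ∫⁻ x in Ω, f n x) := lintegral_liminf_le' hfmeas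
  -- liminf is a.e. finite
  have hlimmeas : AEMeasurable (fun x => atTop.liminf (fun n => f n x)) μ := by
    simp_rw [Filter.liminf_eq_iSup_iInf_of_nat]
    exact AEMeasurable.iSup fun n => AEMeasurable.biInf _ (Set.to_countable _)
      (fun i _ => hfmeas i)
  have hlimfin : ∀ᵐ x ∂μ, atTop.liminf (fun n => f n x) < ⊤ :=
    ae_lt_top' hlimmeas (lt_of_le_of_lt (hFatou.trans hliminfK) ENNReal.ofReal_lt_top).ne
  -- combined a.e. hypotheses
  have hallpos : ∀ᵐ x ∂μ, ∀ n, 0 < un n x := (ae_all_iff).2 hpos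
  -- key pointwise fact: if u x = 0 then liminf = ⊤
  have hkey : ∀ᵐ x ∂μ, 0 < u x := by
    filter_upwards [hhpos, hallpos, hae, hlimfin] with x hx hpx htend hfin
    by_contra hu
    push_neg at hu
    have hu0 : u x = 0 :=
      le_antisymm hu (ge_of_tendsto' htend (fun n => (hpx n).le))
    -- un n x ^ (1-γ) → atTop
    have h1 : Tendsto (fun n => un n x ^ (γ - 1)) atTop (nhds 0) := by
      have hc : ContinuousAt (fun y : ℝ => y ^ (γ - 1)) 0 :=
        Real.continuousAt_rpow_const 0 (γ-1) (Or.inr hγ'.le)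
      have := hc.tendsto.comp (hu0 ▸ htend)
      simpa [Function.comp_def, Real.zero_rpow hγ'.ne'] using this
    have h2 : Tendsto (fun n => un n x ^ (γ - 1)) atTop (nhdsWithin 0 (Set.Ioi 0)) :=
      tendsto_nhdsWithin_of_tendsto_nhds_of_eventually_within _ h1
        (Eventually.of_forall fun n => Real.rpow_pos_of_pos (hpx n) _)
    have h3 : Tendsto (fun n => un n x ^ (1 - γ)) atTop atTop := by
      have := h2.inv_tendsto_nhdsGT_zero
      refine this.congr fun n => ?_
      simp only [Pi.inv_apply]
      rw [← Real.rpow_neg (hpx n).le]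
      ring_nf
    have h4 : Tendsto (fun n => h x * un n x ^ (1 - γ)) atTop atTop :=
      h3.const_mul_atTop hx
    have h5 : Tendsto (fun n => f n x) atTop (nhds ⊤) :=
      ENNReal.tendsto_ofReal_atTop.comp h4
    rw [h5.liminf_eq] at hfin
    exact absurd hfin (by simp)
  refine ⟨hkey, ?_, hliminfK⟩
  -- second part: identify liminf with the limit where u > 0
  have heq : ∀ᵐ x ∂μ, ENNReal.ofReal (h x * u x ^ (1 - γ)) =
      atTop.liminf (fun n => f n x) := by
    filter_upwards [hkey, hae] with x hux htend
    have hc : ContinuousAt (fun y : ℝ => y ^ (1 - γ)) (u x) :=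
      Real.continuousAt_rpow_const _ _ (Or.inl hux.ne')
    have h1 : Tendsto (fun n => h x * un n x ^ (1 - γ)) atTop
        (nhds (h x * u x ^ (1 - γ))) :=
      tendsto_const_nhds.mul (hc.tendsto.comp htend)
    have h2 : Tendsto (fun n => f n x) atTop
        (nhds (ENNReal.ofReal (h x * u x ^ (1 - γ)))) :=
      (ENNReal.continuous_ofReal.tendsto _).comp h1
    exact h2.liminf_eq.symm
  calc (∫⁻ x in Ω, ENNReal.ofReal (h x * u x ^ (1 - γ)))
      = ∫⁻ x, atTop.liminf (fun n => f n x) ∂μ := lintegral_congr_ae heq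
    _ ≤ atTop.liminf (fun n => ∫⁻ x in Ω, f n x) := hFatou
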